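/- (Restricted large sieve moment) There is an absolute constant C > 0 such that the following holds. Let Q ≥ 1 be a real number, let β_1, …, β_R be real numbers that are 1/Q-separated modulo 1 (i.e. ‖β_i − β_j‖ ≥ 1/Q for all i ≠ j), and let c_1, …, c_R be reals with c_i ≥ 1 for all i; set J := ∑_{i=1}^R c_i. Then ∑_{n ∈ ℤ, |n| ≤ Q} | ∑_{i=1}^R c_i^{1/2} e(n β_i) |^{20/9} ≤ C J^{11/9} Q. -/

import Mathlib

open Finset

/-- `ee t = e(t) := exp(2πit)`. -/
noncomputable def ee (t : ℝ) : ℂ := Complex.exp (2 * Real.pi * Complex.I * t)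

/-- `distToInt t = ‖t‖`, the distance from the real `t` to the nearest integer. -/
noncomputable def distToInt (t : ℝ) : ℝ := |t - round t|

lemma distToInt_nonneg (t : ℝ) : 0 ≤ distToInt t := abs_nonneg _

lemma distToInt_le_abs (t : ℝ) : distToInt t ≤ |t| := by
  simpa [distToInt] using round_le t 0

lemma distToInt_neg (t : ℝ) : distToInt (-t) = distToInt t := by
  have h1 : distToInt (-t) ≤ distToInt t := by
    have := round_le (-t) (-(round t)); simp only [Int.cast_neg] at this
    calc distToInt (-t) ≤ |(-t) - (-(round t) : ℤ)| := round_le _ _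
      _ = distToInt t := by unfold distToInt; push_cast; rw [← abs_neg]; ring_nf
  have h2 : distToInt t ≤ distToInt (-t) := by
    calc distToInt t ≤ |t - (-(round (-t)) : ℤ)| := round_le _ _
      _ = distToInt (-t) := by push_cast; rw [← abs_neg]; unfold distToInt; ring_nf
  linarith

lemma distToInt_add_int (t : ℝ) (n : ℤ) : distToInt (t + n) = distToInt t := by
  unfold distToInt; rw [round_add_intCast]; push_cast; ring_nf

lemma ee_add (s t : ℝ) : ee (s + t) = ee s * ee t := by
  unfold ee; rw [← Complex.exp_add]; push_cast; ring_nf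

lemma ee_conj (t : ℝ) : (starRingEnd ℂ) (ee t) = ee (-t) := by
  unfold ee
  rw [← Complex.exp_conj]
  congr 1
  have : ((2:ℂ)*Real.pi*Complex.I*t) = (((2*Real.pi*t:ℝ)):ℂ)*Complex.I := by push_cast; ring
  rw [this, map_mul, Complex.conj_I, Complex.conj_ofReal]
  push_cast; ring

lemma abs_ee (t : ℝ) : ‖ee t‖ = 1 := by
  unfold ee
  rw [Complex.norm_exp]
  norm_num [Complex.mul_re, Complex.mul_im]

lemma ee_nat_mul (m : ℕ) (t : ℝ) : ee ((m : ℝ) * t) = ee t ^ m := by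
  unfold ee
  rw [← Complex.exp_nat_mul]
  congr 1; push_cast; ring

lemma abs_sin_ge (t : ℝ) : 2 * distToInt t ≤ |Real.sin (Real.pi * t)| := by
  set r : ℝ := t - round t with hr
  have hpi := Real.pi_pos
  have hr2 : |r| ≤ 1/2 := abs_sub_round t
  have hra : r ≤ |r| := le_abs_self r
  have hrb : -r ≤ |r| := neg_le_abs r
  have h1 : Real.pi * t = Real.pi * r + (round t) * Real.pi := by ring
  have h2 : |Real.sin (Real.pi * t)| = |Real.sin (Real.pi * r)| := by
    rw [h1, Real.sin_add_int_mul_pi, abs_mul]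
    have : |((-1:ℝ))^(round t)| = 1 := by
      rcases Int.even_or_odd (round t) with he | ho
      · simp [he.neg_one_zpow]
      · simp [ho.neg_one_zpow]
    rw [this, one_mul]
  rw [h2]
  have h3 : |Real.sin (Real.pi * r)| = Real.sin (Real.pi * |r|) := by
    rcases le_or_gt 0 r with h | h
    · rw [abs_of_nonneg h, abs_of_nonneg (Real.sin_nonneg_of_nonneg_of_le_pi
        (by positivity) (by nlinarith))]
    · have hs : Real.sin (Real.pi * r) ≤ 0 := by
        have := Real.sin_nonneg_of_nonneg_of_le_pi (x := Real.pi * (-r))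
          (by nlinarith) (by nlinarith)
        rw [mul_neg, Real.sin_neg] at this; linarith
      rw [abs_of_neg h, abs_of_nonpos hs, mul_neg, Real.sin_neg]
  rw [h3]
  have h4 := Real.mul_le_sin (x := Real.pi * |r|) (by positivity) (by nlinarith)
  have : 2 / Real.pi * (Real.pi * |r|) = 2 * |r| := by field_simp
  rw [this] at h4
  simpa [distToInt] using h4

lemma abs_ee_sub_one (t : ℝ) : ‖ee t - 1‖ = 2 * |Real.sin (Real.pi * t)| := by
  have h : ee t = Complex.exp ((2 * Real.pi * t : ℝ) * Complex.I) := by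
    unfold ee; congr 1; push_cast; ring
  have hre : (ee t - 1).re = Real.cos (2*Real.pi*t) - 1 := by
    rw [h, Complex.sub_re, Complex.exp_ofReal_mul_I_re, Complex.one_re]
  have him : (ee t - 1).im = Real.sin (2*Real.pi*t) := by
    rw [h, Complex.sub_im, Complex.exp_ofReal_mul_I_im, Complex.one_im, sub_zero]
  rw [Complex.norm_def, Complex.normSq_apply, hre, him]
  have key : (Real.cos (2*Real.pi*t) - 1) * (Real.cos (2*Real.pi*t) - 1)
      + Real.sin (2*Real.pi*t) * Real.sin (2*Real.pi*t)
      = (2 * |Real.sin (Real.pi * t)|)^2 := by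
    have h1 := Real.sin_sq_add_cos_sq (2*Real.pi*t)
    have h2 : Real.cos (2*Real.pi*t) = 2 * Real.cos (Real.pi*t)^2 - 1 := by
      rw [← Real.cos_two_mul]; ring_nf
    have h3 := Real.sin_sq_add_cos_sq (Real.pi*t)
    have h4 : |Real.sin (Real.pi*t)|^2 = Real.sin (Real.pi*t)^2 := sq_abs _
    nlinarith
  rw [key, Real.sqrt_sq (by positivity)]

lemma ee_ne_one {t : ℝ} (h : 0 < distToInt t) : ee t ≠ 1 := by
  intro he
  have : ‖ee t - 1‖ = 0 := by rw [he]; simp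
  rw [abs_ee_sub_one] at this
  have := abs_sin_ge t
  linarith [abs_nonneg (Real.sin (Real.pi * t))]

lemma geom_bound (M : ℕ) {t : ℝ} (h : 0 < distToInt t) :
    ‖∑ m ∈ Finset.range M, ee ((m : ℝ) * t)‖ ≤ 1 / (2 * distToInt t) := by
  have hne := ee_ne_one h
  have hsum : ∑ m ∈ Finset.range M, ee ((m : ℝ) * t) = (ee t ^ M - 1) / (ee t - 1) := by
    simp_rw [ee_nat_mul]
    exact geom_sum_eq hne M
  rw [hsum, norm_div]
  have h1 : ‖ee t ^ M - 1‖ ≤ 2 := by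
    calc ‖ee t ^ M - 1‖ ≤ ‖ee t ^ M‖ + ‖(1:ℂ)‖ :=
      (norm_sub_le _ _)
      _ = 2 := by rw [norm_pow, abs_ee]; norm_num
  have h2 : 4 * distToInt t ≤ ‖ee t - 1‖ := by
    rw [abs_ee_sub_one]; linarith [abs_sin_ge t]
  have h3 : 0 < ‖ee t - 1‖ := by linarith
  rw [div_le_div_iff₀ h3 (by positivity)]
  nlinarith

lemma basel (K : ℕ) : ∑ k ∈ Finset.Icc 1 K, (1:ℝ)/(k:ℝ)^2 ≤ 2 := by
  have key : ∀ K : ℕ, 1 ≤ K → ∑ k ∈ Finset.Icc 1 K, (1:ℝ)/(k:ℝ)^2 ≤ 2 - 1/K := by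
    intro K hK
    induction K, hK using Nat.le_induction with
    | base => norm_num
    | succ n hn ih =>
      rw [Finset.sum_Icc_succ_top (by omega)]
      have hn' : (1:ℝ) ≤ (n:ℝ) := by exact_mod_cast hn
      have step : (1:ℝ)/((n:ℝ)+1)^2 ≤ 1/n - 1/(n+1) := by
        rw [div_sub_div _ _ (by linarith) (by linarith)]
        rw [div_le_div_iff₀ (by positivity) (by positivity)]
        ring_nf; nlinarith
      push_cast
      linarith
  rcases Nat.eq_zero_or_pos K with h | h
  · simp [h]
  · have h1 := key K h
    have h2 : (0:ℝ) < K := by exact_mod_cast h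
    have h3 : 0 < 1/(K:ℝ) := by positivity
    linarith

lemma sep_sum (Q : ℝ) (hQ : 1 ≤ Q) {R : ℕ} (β : Fin R → ℝ)
    (hsep : ∀ i j, i ≠ j → 1/Q ≤ distToInt (β i - β j)) (i₀ : Fin R) :
    ∑ j ∈ Finset.univ.erase i₀, 1 / distToInt (β i₀ - β j)^2 ≤ 4 * Q^2 := by
  have hQ0 : (0:ℝ) < Q := by linarith
  set r : Fin R → ℝ := fun j => (β i₀ - β j) - round (β i₀ - β j) with hr
  have hd : ∀ j, distToInt (β i₀ - β j) = |r j| := fun j => rfl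
  set k : Fin R → ℕ := fun j => ⌊Q * |r j|⌋₊ with hk
  set g : Fin R → ℕ × Bool := fun j => (k j, decide (0 ≤ r j)) with hg
  -- basic facts for j ≠ i₀
  have hsep' : ∀ j ∈ Finset.univ.erase i₀, 1/Q ≤ |r j| := by
    intro j hj
    rw [← hd]
    exact hsep i₀ j (Ne.symm (Finset.ne_of_mem_erase hj))
  have hk1 : ∀ j ∈ Finset.univ.erase i₀, 1 ≤ k j := by
    intro j hj
    have h1 : (1:ℝ) ≤ Q * |r j| := by
      have := hsep' j hj
      calc (1:ℝ) = Q * (1/Q) := by field_simp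
        _ ≤ Q * |r j| := by apply mul_le_mul_of_nonneg_left this (le_of_lt hQ0)
    exact Nat.le_floor (by exact_mod_cast h1)
  have hkK : ∀ j, k j ≤ ⌊Q⌋₊ := by
    intro j
    apply Nat.floor_mono
    have : |r j| ≤ 1 := by
      calc |r j| ≤ 1/2 := abs_sub_round _
        _ ≤ 1 := by norm_num
    nlinarith
  -- injectivity
  have hinj : ∀ x ∈ Finset.univ.erase i₀, ∀ y ∈ Finset.univ.erase i₀, g x = g y → x = y := by
    intro x hx y hy hxy
    by_contra hne
    have hkk : k x = k y := congrArg Prod.fst hxy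
    have hss : (0 ≤ r x) ↔ (0 ≤ r y) := by
      have := congrArg Prod.snd hxy
      simpa [hg, decide_eq_decide] using this
    -- |r x| and |r y| within 1/Q
    have hfx : (k x : ℝ) ≤ Q * |r x| := Nat.floor_le (by positivity)
    have hfy : (k y : ℝ) ≤ Q * |r y| := Nat.floor_le (by positivity)
    have hfx' : Q * |r x| < k x + 1 := Nat.lt_floor_add_one _
    have hfy' : Q * |r y| < k y + 1 := Nat.lt_floor_add_one _
    have hkkr : ((k x : ℕ) : ℝ) = ((k y : ℕ) : ℝ) := by exact_mod_cast hkk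
    have habs : |(|r x| - |r y|)| < 1/Q := by
      rw [abs_sub_lt_iff]
      constructor
      · rw [lt_div_iff₀ hQ0]; nlinarith
      · rw [lt_div_iff₀ hQ0]; nlinarith
    have hsame : |r x - r y| = |(|r x| - |r y|)| := by
      rcases le_or_gt 0 (r x) with h | h
      · have h2 : 0 ≤ r y := hss.mp h
        rw [abs_of_nonneg h, abs_of_nonneg h2]
      · have h2 : r y < 0 := by
          by_contra h3
          push_neg at h3
          exact absurd (hss.mpr h3) (not_le.mpr h)
        rw [abs_of_neg h, abs_of_neg h2]
        rw [show -r x - -r y = -(r x - r y) by ring, abs_neg]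
    -- contradiction with separation between x and y
    have hxy2 : β x - β y = (r y - r x) + ((round (β i₀ - β y) : ℤ) - (round (β i₀ - β x) : ℤ)) := by
      simp only [hr]; push_cast; ring
    have : distToInt (β x - β y) < 1/Q := by
      rw [hxy2]
      have : ((round (β i₀ - β y) : ℤ) - (round (β i₀ - β x) : ℤ)) = (((round (β i₀ - β y) - round (β i₀ - β x) : ℤ) : ℝ)) := by push_cast; ring
      rw [this, distToInt_add_int]
      calc distToInt (r y - r x) ≤ |r y - r x| := distToInt_le_abs _
        _ = |r x - r y| := by rw [← abs_neg]; ring_nf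
        _ < 1/Q := by rw [hsame]; exact habs
    exact absurd (hsep x y hne) (not_le.mpr this)
  -- reindex and sum
  have hstep1 : ∀ j ∈ Finset.univ.erase i₀,
      1 / distToInt (β i₀ - β j)^2 ≤ Q^2 / (k j : ℝ)^2 := by
    intro j hj
    have h1 := hk1 j hj
    have h1' : (0:ℝ) < (k j : ℝ) := by exact_mod_cast h1
    have h2 : (k j : ℝ) ≤ Q * |r j| := Nat.floor_le (by positivity)
    have h3 : 0 < |r j| := lt_of_lt_of_le (by positivity) (hsep' j hj)
    rw [hd j, div_le_div_iff₀ (by positivity) (by positivity)]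
    nlinarith
  calc ∑ j ∈ Finset.univ.erase i₀, 1 / distToInt (β i₀ - β j)^2
      ≤ ∑ j ∈ Finset.univ.erase i₀, Q^2 / (k j : ℝ)^2 := Finset.sum_le_sum hstep1
    _ = ∑ p ∈ (Finset.univ.erase i₀).image g, Q^2 / (p.1 : ℝ)^2 := by
        rw [Finset.sum_image hinj]
    _ ≤ ∑ p ∈ (Finset.Icc 1 ⌊Q⌋₊) ×ˢ (Finset.univ : Finset Bool), Q^2 / (p.1 : ℝ)^2 := by
        apply Finset.sum_le_sum_of_subset_of_nonneg
        · intro p hp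
          rw [Finset.mem_image] at hp
          obtain ⟨j, hj, hpj⟩ := hp
          rw [← hpj]
          rw [Finset.mem_product]
          exact ⟨Finset.mem_Icc.mpr ⟨hk1 j hj, hkK j⟩, Finset.mem_univ _⟩
        · intro p _ _; positivity
    _ = ∑ x ∈ Finset.Icc 1 ⌊Q⌋₊, 2 * (Q^2 / (x : ℝ)^2) := by
        rw [Finset.sum_product]
        apply Finset.sum_congr rfl
        intro x _
        simp [Finset.sum_const]
        try ring
    _ = 2 * Q^2 * ∑ x ∈ Finset.Icc 1 ⌊Q⌋₊, 1 / (x : ℝ)^2 := by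
        rw [Finset.mul_sum]
        apply Finset.sum_congr rfl
        intro x _; ring
    _ ≤ 2 * Q^2 * 2 := by
        apply mul_le_mul_of_nonneg_left (basel _) (by positivity)
    _ = 4 * Q^2 := by ring

lemma count_lemma (N : ℕ) (f : ℤ → ℝ) (hf : ∀ n, 0 ≤ f n) :
    ((N:ℝ)+1) * ∑ n ∈ Finset.Icc (-(N:ℤ)) N, f n ≤
      ∑ m ∈ Finset.range (2*N+1), ∑ m' ∈ Finset.range (2*N+1), f ((m:ℤ) - (m':ℤ)) := by
  set s : Finset (ℤ × ℕ) := (Finset.Icc (-(N:ℤ)) N) ×ˢ Finset.range (N+1) with hs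
  set g : ℤ × ℕ → ℕ × ℕ := fun p => (p.2 + (max p.1 0).toNat, p.2 + (max (-p.1) 0).toNat)
    with hgdef
  have hrecover : ∀ p : ℤ × ℕ, ((g p).1 : ℤ) - ((g p).2 : ℤ) = p.1 := by
    intro p; simp only [hgdef]; push_cast; omega
  have hinj : ∀ x ∈ s, ∀ y ∈ s, g x = g y → x = y := by
    intro x _ y _ hxy
    have h1 : (g x).1 = (g y).1 := by rw [hxy]
    have h2 : (g x).2 = (g y).2 := by rw [hxy]
    have h3 : x.1 = y.1 := by
      have := hrecover x; rw [hxy] at this; rw [← this, hrecover y]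
    have h4 : x.2 = y.2 := by
      simp only [hgdef] at h1
      omega
    exact Prod.ext h3 h4
  have lhs_eq : ((N:ℝ)+1) * ∑ n ∈ Finset.Icc (-(N:ℤ)) N, f n = ∑ p ∈ s, f p.1 := by
    rw [hs, Finset.sum_product]
    rw [Finset.mul_sum]
    apply Finset.sum_congr rfl
    intro n _
    simp [Finset.sum_const, Finset.card_range]
    try push_cast
    try ring
  rw [lhs_eq]
  have him : ∀ p ∈ s, g p ∈ (Finset.range (2*N+1)) ×ˢ (Finset.range (2*N+1)) := by
    intro p hp
    rw [hs, Finset.mem_product, Finset.mem_Icc, Finset.mem_range] at hp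
    rw [Finset.mem_product, Finset.mem_range, Finset.mem_range]
    simp only [hgdef]
    omega
  calc ∑ p ∈ s, f p.1 = ∑ q ∈ s.image g, f ((q.1 : ℤ) - (q.2 : ℤ)) := by
        rw [Finset.sum_image hinj]
        apply Finset.sum_congr rfl
        intro p _
        rw [hrecover p]
    _ ≤ ∑ q ∈ (Finset.range (2*N+1)) ×ˢ (Finset.range (2*N+1)), f ((q.1 : ℤ) - (q.2 : ℤ)) := by
        apply Finset.sum_le_sum_of_subset_of_nonneg
        · intro q hq
          rw [Finset.mem_image] at hq
          obtain ⟨p, hp, hpq⟩ := hq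
          rw [← hpq]; exact him p hp
        · intro q _ _; exact hf _
    _ = ∑ m ∈ Finset.range (2*N+1), ∑ m' ∈ Finset.range (2*N+1), f ((m:ℤ) - (m':ℤ)) := by
        rw [Finset.sum_product]

lemma swap4 {γ : Type*} [AddCommMonoid γ] {R : ℕ} (s t : Finset ℕ)
    (f : ℕ → ℕ → Fin R → Fin R → γ) :
    ∑ m ∈ s, ∑ m' ∈ t, ∑ i, ∑ j, f m m' i j = ∑ i, ∑ j, ∑ m ∈ s, ∑ m' ∈ t, f m m' i j := by
  calc ∑ m ∈ s, ∑ m' ∈ t, ∑ i, ∑ j, f m m' i j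
      = ∑ m ∈ s, ∑ i, ∑ m' ∈ t, ∑ j, f m m' i j :=
        Finset.sum_congr rfl (fun m _ => Finset.sum_comm)
    _ = ∑ i, ∑ m ∈ s, ∑ m' ∈ t, ∑ j, f m m' i j := Finset.sum_comm
    _ = ∑ i, ∑ m ∈ s, ∑ j, ∑ m' ∈ t, f m m' i j :=
        Finset.sum_congr rfl (fun i _ => Finset.sum_congr rfl (fun m _ => Finset.sum_comm))
    _ = ∑ i, ∑ j, ∑ m ∈ s, ∑ m' ∈ t, f m m' i j :=
        Finset.sum_congr rfl (fun i _ => Finset.sum_comm)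


lemma Sconj {R : ℕ} (a β : Fin R → ℝ) (n : ℤ) :
    (∑ i, (a i : ℂ) * ee ((n:ℝ) * β i)) * (starRingEnd ℂ) (∑ i, (a i : ℂ) * ee ((n:ℝ) * β i))
      = ∑ i, ∑ j, ((a i : ℂ) * (a j : ℂ)) * ee ((n:ℝ) * (β i - β j)) := by
  rw [map_sum, Finset.sum_mul_sum]
  apply Finset.sum_congr rfl; intro i _
  apply Finset.sum_congr rfl; intro j _
  rw [map_mul, Complex.conj_ofReal, ee_conj]
  have : ee ((n:ℝ) * (β i - β j)) = ee ((n:ℝ) * β i) * ee (-((n:ℝ) * β j)) := by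
    rw [← ee_add]; congr 1; ring
  rw [this]; ring

lemma Gconj (M : ℕ) (θ : ℝ) :
    (∑ m ∈ Finset.range M, ee ((m:ℝ) * θ)) * (starRingEnd ℂ) (∑ m ∈ Finset.range M, ee ((m:ℝ) * θ))
      = ∑ m ∈ Finset.range M, ∑ m' ∈ Finset.range M, ee ((((m:ℤ) - (m':ℤ)):ℝ) * θ) := by
  rw [map_sum, Finset.sum_mul_sum]
  apply Finset.sum_congr rfl; intro m _
  apply Finset.sum_congr rfl; intro m' _
  rw [ee_conj, ← ee_add]
  congr 1; push_cast; ring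

lemma key_identity {R : ℕ} (a β : Fin R → ℝ) (M : ℕ) :
    ∑ m ∈ Finset.range M, ∑ m' ∈ Finset.range M,
        Complex.normSq (∑ i, (a i : ℂ) * ee (((((m:ℤ) - (m':ℤ)):ℤ):ℝ) * β i))
      = ∑ i, ∑ j, (a i * a j) * Complex.normSq (∑ m ∈ Finset.range M, ee ((m:ℝ) * (β i - β j))) := by
  have hC : (∑ m ∈ Finset.range M, ∑ m' ∈ Finset.range M,
        (Complex.normSq (∑ i, (a i : ℂ) * ee (((((m:ℤ) - (m':ℤ)):ℤ):ℝ) * β i)) : ℂ))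
      = ∑ i, ∑ j, ((a i : ℂ) * (a j : ℂ)) *
          (Complex.normSq (∑ m ∈ Finset.range M, ee ((m:ℝ) * (β i - β j))) : ℂ) := by
    have step1 : ∀ m ∈ Finset.range M, ∀ m' ∈ Finset.range M,
        (Complex.normSq (∑ i, (a i : ℂ) * ee (((((m:ℤ) - (m':ℤ)):ℤ):ℝ) * β i)) : ℂ)
        = ∑ i, ∑ j, ((a i : ℂ) * (a j : ℂ)) * ee (((((m:ℤ) - (m':ℤ)):ℤ):ℝ) * (β i - β j)) := by
      intro m _ m' _
      rw [← Complex.mul_conj]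
      exact Sconj a β ((m:ℤ) - (m':ℤ))
    calc ∑ m ∈ Finset.range M, ∑ m' ∈ Finset.range M,
          (Complex.normSq (∑ i, (a i : ℂ) * ee (((((m:ℤ) - (m':ℤ)):ℤ):ℝ) * β i)) : ℂ)
        = ∑ m ∈ Finset.range M, ∑ m' ∈ Finset.range M, ∑ i, ∑ j,
            ((a i : ℂ) * (a j : ℂ)) * ee (((((m:ℤ) - (m':ℤ)):ℤ):ℝ) * (β i - β j)) := by
          apply Finset.sum_congr rfl; intro m hm
          apply Finset.sum_congr rfl; intro m' hm'
          exact step1 m hm m' hm'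
      _ = ∑ i, ∑ j, ∑ m ∈ Finset.range M, ∑ m' ∈ Finset.range M,
            ((a i : ℂ) * (a j : ℂ)) * ee (((((m:ℤ) - (m':ℤ)):ℤ):ℝ) * (β i - β j)) := by
          exact swap4 _ _ _
      _ = ∑ i, ∑ j, ((a i : ℂ) * (a j : ℂ)) *
            (Complex.normSq (∑ m ∈ Finset.range M, ee ((m:ℝ) * (β i - β j))) : ℂ) := by
          apply Finset.sum_congr rfl; intro i _
          apply Finset.sum_congr rfl; intro j _
          rw [← Complex.mul_conj, Gconj M (β i - β j), Finset.mul_sum]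
          apply Finset.sum_congr rfl; intro m _
          rw [Finset.mul_sum]
          apply Finset.sum_congr rfl; intro m' _
          norm_cast
  exact_mod_cast hC

/-- Restricted large sieve moment: there is an absolute `C > 0` such that
for any real `Q ≥ 1`, any `1/Q`-separated (mod 1) reals `β_1, …, β_R` and any reals
`c_i ≥ 1` with `J := ∑ c_i`,
`∑_{|n| ≤ Q} |∑_i c_i^{1/2} e(n β_i)|^{20/9} ≤ C J^{11/9} Q`. -/
theorem statement12 : ∃ C : ℝ, 0 < C ∧ ∀ (Q : ℝ), 1 ≤ Q → ∀ (R : ℕ) (β : Fin R → ℝ),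
    (∀ i j, i ≠ j → 1 / Q ≤ distToInt (β i - β j)) →
    ∀ c : Fin R → ℝ, (∀ i, 1 ≤ c i) →
    ∑ n ∈ Finset.Icc (-(⌊Q⌋₊ : ℤ)) (⌊Q⌋₊ : ℤ),
        ‖∑ i, (Real.sqrt (c i) : ℂ) * ee ((n : ℝ) * β i)‖ ^ ((20 : ℝ) / 9) ≤
      C * (∑ i, c i) ^ ((11 : ℝ) / 9) * Q := by
  refine ⟨10, by norm_num, ?_⟩
  intro Q hQ R β hsep c hc
  have hQ0 : (0:ℝ) < Q := by linarith
  rcases Nat.eq_zero_or_pos R with hR | hR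
  · subst hR
    simp only [Finset.univ_eq_empty, Finset.sum_empty, map_zero, norm_zero,
      Real.zero_rpow (by norm_num : ((20:ℝ)/9) ≠ 0),
      Real.zero_rpow (by norm_num : ((11:ℝ)/9) ≠ 0), Finset.sum_const_zero, mul_zero, zero_mul]
    exact le_rfl
  -- main case
  set a : Fin R → ℝ := fun i => Real.sqrt (c i) with ha
  set J : ℝ := ∑ i, c i with hJ
  set N : ℕ := ⌊Q⌋₊ with hN
  set M : ℕ := 2*N+1 with hM
  set S : ℤ → ℂ := fun n => ∑ i, (a i : ℂ) * ee ((n : ℝ) * β i) with hS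
  have hc0 : ∀ i, (0:ℝ) ≤ c i := fun i => le_trans zero_le_one (hc i)
  have ha2 : ∀ i, a i ^ 2 = c i := fun i => Real.sq_sqrt (hc0 i)
  have ha0 : ∀ i, 0 ≤ a i := fun i => Real.sqrt_nonneg _
  have hac : ∀ i, a i ≤ c i := by
    intro i
    have h1 : c i ≤ (c i)^2 := by nlinarith [hc i]
    calc a i = Real.sqrt (c i) := rfl
      _ ≤ Real.sqrt ((c i)^2) := Real.sqrt_le_sqrt h1
      _ = c i := Real.sqrt_sq (hc0 i)
  have hJ1 : 1 ≤ J := by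
    calc (1:ℝ) ≤ (R:ℝ) := by exact_mod_cast hR
      _ = ∑ _i : Fin R, (1:ℝ) := by simp
      _ ≤ J := Finset.sum_le_sum (fun i _ => hc i)
  have hJ0 : (0:ℝ) < J := by linarith
  have hNQ : (N:ℝ) ≤ Q := Nat.floor_le (le_of_lt hQ0)
  have hQN : Q < (N:ℝ) + 1 := Nat.lt_floor_add_one Q
  -- pointwise bound
  have habsS : ∀ n : ℤ, ‖S n‖ ≤ J := by
    intro n
    calc ‖S n‖ ≤ ∑ i, ‖(a i : ℂ) * ee ((n : ℝ) * β i)‖ :=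
        norm_sum_le _ _
      _ = ∑ i, a i := by
          apply Finset.sum_congr rfl; intro i _
          rw [norm_mul, abs_ee, Complex.norm_of_nonneg (ha0 i), mul_one]
      _ ≤ J := Finset.sum_le_sum (fun i _ => hac i)
  -- large sieve
  have hsieve : ∑ n ∈ Finset.Icc (-(N:ℤ)) N, ‖S n‖^2 ≤ 10 * Q * J := by
    have c1 := count_lemma N (fun n => ‖S n‖^2) (fun n => sq_nonneg _)
    have c2 : ∑ m ∈ Finset.range M, ∑ m' ∈ Finset.range M, ‖S ((m:ℤ) - (m':ℤ))‖^2
        = ∑ i, ∑ j, (a i * a j) *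
          Complex.normSq (∑ m ∈ Finset.range M, ee ((m:ℝ) * (β i - β j))) := by
      rw [← key_identity a β M]
      apply Finset.sum_congr rfl; intro m _
      apply Finset.sum_congr rfl; intro m' _
      rw [Complex.sq_norm]
    -- bound the kernel sum
    have c3 : ∑ i, ∑ j, (a i * a j) *
          Complex.normSq (∑ m ∈ Finset.range M, ee ((m:ℝ) * (β i - β j)))
        ≤ ∑ i, ∑ j, (if i = j then (M:ℝ)^2 * c i
            else (c i + c j) / (8 * distToInt (β i - β j)^2)) := by
      apply Finset.sum_le_sum; intro i _
      apply Finset.sum_le_sum; intro j _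
      by_cases hij : i = j
      · subst hij
        rw [if_pos rfl]
        have hG0 : (∑ m ∈ Finset.range M, ee ((m:ℝ) * (β i - β i))) = (M:ℂ) := by
          have : ∀ m ∈ Finset.range M, ee ((m:ℝ) * (β i - β i)) = 1 := by
            intro m _
            have : (m:ℝ) * (β i - β i) = 0 := by ring
            rw [this]; unfold ee; simp
          rw [Finset.sum_congr rfl this]; simp
        rw [hG0]
        have hns : Complex.normSq ((M:ℕ):ℂ) = (M:ℝ)^2 := by
          rw [show ((M:ℕ):ℂ) = ((M:ℝ):ℂ) by push_cast; rfl, Complex.normSq_ofReal]; ring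
        rw [hns]
        nlinarith [ha2 i, sq_nonneg ((M:ℝ))]
      · rw [if_neg hij]
        have hd : 1/Q ≤ distToInt (β i - β j) := hsep i j hij
        have hd0 : 0 < distToInt (β i - β j) := lt_of_lt_of_le (by positivity) hd
        have hgb := geom_bound M hd0
        have h1 : Complex.normSq (∑ m ∈ Finset.range M, ee ((m:ℝ) * (β i - β j)))
            ≤ 1 / (4 * distToInt (β i - β j)^2) := by
          rw [← Complex.sq_norm]
          calc ‖∑ m ∈ Finset.range M, ee ((m:ℝ) * (β i - β j))‖^2
              ≤ (1 / (2 * distToInt (β i - β j)))^2 := by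
                apply pow_le_pow_left₀ (norm_nonneg _) hgb
            _ = 1 / (4 * distToInt (β i - β j)^2) := by
                rw [div_pow]; congr 1 <;> ring
        have h2 : a i * a j ≤ (c i + c j) / 2 := by
          nlinarith [sq_nonneg (a i - a j), ha2 i, ha2 j]
        calc (a i * a j) * Complex.normSq (∑ m ∈ Finset.range M, ee ((m:ℝ) * (β i - β j)))
            ≤ ((c i + c j)/2) * (1 / (4 * distToInt (β i - β j)^2)) := by
              apply mul_le_mul h2 h1 (Complex.normSq_nonneg _)
              linarith [hc0 i, hc0 j]
          _ = (c i + c j) / (8 * distToInt (β i - β j)^2) := by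
              rw [div_mul_div_comm, mul_one]
              congr 1
              ring
    have c4 : ∑ i, ∑ j, (if i = j then (M:ℝ)^2 * c i
            else (c i + c j) / (8 * distToInt (β i - β j)^2))
        ≤ (M:ℝ)^2 * J + Q^2 * J := by
      have split : ∀ i : Fin R, ∑ j, (if i = j then (M:ℝ)^2 * c i
            else (c i + c j) / (8 * distToInt (β i - β j)^2))
          = (M:ℝ)^2 * c i + ∑ j ∈ Finset.univ.erase i,
              (c i + c j) / (8 * distToInt (β i - β j)^2) := by
        intro i
        rw [← Finset.add_sum_erase _ _ (Finset.mem_univ i), if_pos rfl]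
        congr 1
        apply Finset.sum_congr rfl
        intro j hj
        rw [if_neg (fun h => (Finset.ne_of_mem_erase hj) h.symm)]
      rw [Finset.sum_congr rfl (fun i _ => split i), Finset.sum_add_distrib]
      have part1 : ∑ i, (M:ℝ)^2 * c i = (M:ℝ)^2 * J := by rw [hJ, Finset.mul_sum]
      have part2 : ∑ i, ∑ j ∈ Finset.univ.erase i,
          (c i + c j) / (8 * distToInt (β i - β j)^2) ≤ Q^2 * J := by
        have hsplit : ∀ i : Fin R, ∀ j : Fin R,
            (c i + c j) / (8 * distToInt (β i - β j)^2)
            = c i / 8 * (1 / distToInt (β i - β j)^2)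
              + c j / 8 * (1 / distToInt (β i - β j)^2) := by
          intro i j
          rw [div_mul_div_comm, div_mul_div_comm, mul_one, mul_one, ← add_div]
        have E1 : ∑ i, ∑ j ∈ Finset.univ.erase i,
            c i / 8 * (1 / distToInt (β i - β j)^2) ≤ Q^2/2 * J := by
          calc ∑ i, ∑ j ∈ Finset.univ.erase i, c i / 8 * (1 / distToInt (β i - β j)^2)
              = ∑ i, c i / 8 * ∑ j ∈ Finset.univ.erase i, (1 / distToInt (β i - β j)^2) := by
                apply Finset.sum_congr rfl; intro i _; rw [Finset.mul_sum]
            _ ≤ ∑ i, c i / 8 * (4 * Q^2) := by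
                apply Finset.sum_le_sum; intro i _
                apply mul_le_mul_of_nonneg_left (sep_sum Q hQ β hsep i)
                  (by linarith [hc0 i])
            _ = Q^2/2 * J := by
                rw [hJ, Finset.mul_sum]
                exact Finset.sum_congr rfl (fun i _ => by ring)
        have E2 : ∑ i, ∑ j ∈ Finset.univ.erase i,
            c j / 8 * (1 / distToInt (β i - β j)^2) ≤ Q^2/2 * J := by
          have hswap : ∑ i, ∑ j ∈ Finset.univ.erase i,
              c j / 8 * (1 / distToInt (β i - β j)^2)
              = ∑ j, ∑ i ∈ Finset.univ.erase j,
                c j / 8 * (1 / distToInt (β i - β j)^2) := by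
            exact Finset.sum_comm' (fun x y => by
              simp only [Finset.mem_univ, Finset.mem_erase, true_and, and_true]
              exact ne_comm)
          rw [hswap]
          calc ∑ j, ∑ i ∈ Finset.univ.erase j, c j / 8 * (1 / distToInt (β i - β j)^2)
              = ∑ j, c j / 8 * ∑ i ∈ Finset.univ.erase j, (1 / distToInt (β j - β i)^2) := by
                apply Finset.sum_congr rfl; intro j _
                rw [Finset.mul_sum]
                apply Finset.sum_congr rfl; intro i _
                rw [show β j - β i = -(β i - β j) by ring, distToInt_neg]
            _ ≤ ∑ j, c j / 8 * (4 * Q^2) := by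
                apply Finset.sum_le_sum; intro j _
                apply mul_le_mul_of_nonneg_left (sep_sum Q hQ β hsep j)
                  (by linarith [hc0 j])
            _ = Q^2/2 * J := by
                rw [hJ, Finset.mul_sum]
                exact Finset.sum_congr rfl (fun j _ => by ring)
        calc ∑ i, ∑ j ∈ Finset.univ.erase i, (c i + c j) / (8 * distToInt (β i - β j)^2)
            = ∑ i, ∑ j ∈ Finset.univ.erase i,
              (c i / 8 * (1 / distToInt (β i - β j)^2)
                + c j / 8 * (1 / distToInt (β i - β j)^2)) := by
              apply Finset.sum_congr rfl; intro i _
              apply Finset.sum_congr rfl; intro j _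
              exact hsplit i j
          _ = (∑ i, ∑ j ∈ Finset.univ.erase i, c i / 8 * (1 / distToInt (β i - β j)^2))
              + ∑ i, ∑ j ∈ Finset.univ.erase i, c j / 8 * (1 / distToInt (β i - β j)^2) := by
              rw [← Finset.sum_add_distrib]
              apply Finset.sum_congr rfl; intro i _
              rw [← Finset.sum_add_distrib]
          _ ≤ Q^2/2 * J + Q^2/2 * J := add_le_add E1 E2
          _ = Q^2 * J := by ring
      linarith [part1, part2, le_of_eq part1]
    -- combine
    have hsum_nonneg : 0 ≤ ∑ n ∈ Finset.Icc (-(N:ℤ)) N, ‖S n‖^2 :=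
      Finset.sum_nonneg (fun n _ => sq_nonneg _)
    have hM3Q : (M:ℝ) ≤ 3*Q := by
      have : (M:ℝ) = 2*(N:ℝ)+1 := by rw [hM]; push_cast; ring
      rw [this]; linarith
    have hT : ((N:ℝ)+1) * ∑ n ∈ Finset.Icc (-(N:ℤ)) N, ‖S n‖^2
        ≤ 10 * Q^2 * J := by
      calc ((N:ℝ)+1) * ∑ n ∈ Finset.Icc (-(N:ℤ)) N, ‖S n‖^2
          ≤ ∑ m ∈ Finset.range M, ∑ m' ∈ Finset.range M,
            ‖S ((m:ℤ) - (m':ℤ))‖^2 := by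
            have := count_lemma N (fun n => ‖S n‖^2) (fun n => sq_nonneg _)
            simpa [hM] using this
        _ ≤ 10 * Q^2 * J := by
            rw [c2]
            calc ∑ i, ∑ j, (a i * a j) *
                Complex.normSq (∑ m ∈ Finset.range M, ee ((m:ℝ) * (β i - β j)))
                ≤ ∑ i, ∑ j, (if i = j then (M:ℝ)^2 * c i
                  else (c i + c j) / (8 * distToInt (β i - β j)^2)) := c3
              _ ≤ (M:ℝ)^2 * J + Q^2 * J := c4
              _ ≤ 10 * Q^2 * J := by
                  have hM2 : ((M:ℕ):ℝ)^2 ≤ 9*Q^2 := by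
                    nlinarith [hM3Q, Nat.cast_nonneg (α := ℝ) M]
                  nlinarith [mul_le_mul_of_nonneg_right hM2 (le_of_lt hJ0)]
    nlinarith [hT, hsum_nonneg, hQN, hQ0, hJ0]
  -- Hölder and conclusion
  have hhold : ∀ n : ℤ, ‖S n‖ ^ ((20:ℝ)/9)
      ≤ J ^ ((2:ℝ)/9) * ‖S n‖^2 := by
    intro n
    have hx : 0 ≤ ‖S n‖ := norm_nonneg _
    rcases eq_or_lt_of_le hx with h | h
    · rw [← h, Real.zero_rpow (by norm_num)]
      positivity
    · have e1 : ‖S n‖ ^ ((20:ℝ)/9)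
          = ‖S n‖ ^ ((2:ℝ)/9) * ‖S n‖^2 := by
        rw [← Real.rpow_natCast (‖S n‖) 2, ← Real.rpow_add h]
        norm_num
      rw [e1]
      apply mul_le_mul_of_nonneg_right _ (sq_nonneg _)
      exact Real.rpow_le_rpow hx (habsS n) (by norm_num)
  have hrepr : (∑ n ∈ Finset.Icc (-(⌊Q⌋₊:ℤ)) (⌊Q⌋₊:ℤ),
      ‖∑ i, (Real.sqrt (c i) : ℂ) * ee ((n : ℝ) * β i)‖ ^ ((20:ℝ)/9))
      = ∑ n ∈ Finset.Icc (-(N:ℤ)) N, ‖S n‖ ^ ((20:ℝ)/9) := rfl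
  rw [hrepr]
  calc ∑ n ∈ Finset.Icc (-(N:ℤ)) N, ‖S n‖ ^ ((20:ℝ)/9)
      ≤ ∑ n ∈ Finset.Icc (-(N:ℤ)) N, J ^ ((2:ℝ)/9) * ‖S n‖^2 :=
        Finset.sum_le_sum (fun n _ => hhold n)
    _ = J ^ ((2:ℝ)/9) * ∑ n ∈ Finset.Icc (-(N:ℤ)) N, ‖S n‖^2 := by
        rw [Finset.mul_sum]
    _ ≤ J ^ ((2:ℝ)/9) * (10 * Q * J) := by
        apply mul_le_mul_of_nonneg_left hsieve (Real.rpow_nonneg (le_of_lt hJ0) _)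
    _ = 10 * J ^ ((11:ℝ)/9) * Q := by
        rw [show (11:ℝ)/9 = (2:ℝ)/9 + 1 by norm_num, Real.rpow_add hJ0, Real.rpow_one]
        ring
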